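/- arXiv:0804.0171 — 11 statements merged into one kernel-verified Lean document; each statement's English description precedes it below -/
import Mathlib

section
/- For every integer N ≥ 2, every n ∈ ℤ, every k ∈ ℤ and every j ∈ {1,2,3,4,5,6}, the edge vector e_{n,j,k} of the armchair nanotube graph Γ^N has Euclidean norm 1; that is, every edge of Γ^N is a segment of length 1 (this justifies the length-preserving local coordinate t ∈ [0,1] on each edge). -/
lemma chord_sq (r θ₁ θ₂ z₁ z₂ : ℝ) :
    (r * Real.cos θ₂ - r * Real.cos θ₁) ^ 2 + (r * Real.sin θ₂ - r * Real.sin θ₁) ^ 2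
      + (z₂ - z₁) ^ 2
      = 2 * r ^ 2 * (1 - Real.cos (θ₂ - θ₁)) + (z₂ - z₁) ^ 2 := by
  rw [Real.cos_sub]
  nlinarith [Real.sin_sq_add_cos_sq θ₁, Real.sin_sq_add_cos_sq θ₂]

lemma norm_eq_one_of (x : EuclideanSpace ℝ (Fin 3))
    (h : x 0 ^ 2 + x 1 ^ 2 + x 2 ^ 2 = 1) : ‖x‖ = 1 := by
  rw [EuclideanSpace.norm_eq, Fin.sum_univ_three]
  simp only [Real.norm_eq_abs, sq_abs]
  rw [h, Real.sqrt_one]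


/-- The radius `R = √(cos(π/N) + 5/4) / sin(π/N)` of the armchair nanotube. -/
noncomputable def armR (N : ℕ) : ℝ :=
  Real.sqrt (Real.cos (Real.pi / N) + 5 / 4) / Real.sin (Real.pi / N)

noncomputable def armR1 (N : ℕ) : ℝ := Real.sqrt ((armR N) ^ 2 - 1)

noncomputable def armR2 (N : ℕ) : ℝ := Real.sqrt (4 * (armR N) ^ 2 - 1)

/-- `α = arcsin(1/(2R))`. -/
noncomputable def armAlpha (N : ℕ) : ℝ := Real.arcsin (1 / (2 * armR N))

/-- `β = arcsin(1/R)`. -/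
noncomputable def armBeta (N : ℕ) : ℝ := Real.arcsin (1 / armR N)

/-- The height step `h = √(2 + R₁R₂ − 2R²)`. -/
noncomputable def armH (N : ℕ) : ℝ :=
  Real.sqrt (2 + armR1 N * armR2 N - 2 * (armR N) ^ 2)

/-- The angle `φ_k = kπ/N`. -/
noncomputable def armPhi (N : ℕ) (k : ℤ) : ℝ := k * Real.pi / N

/-- The vertex `r_{n,j,k}` of the armchair graph `Γ^N`; here `j : Fin 6`
encodes the index `j+1 ∈ {1,…,6}` of the paper. -/
noncomputable def armVertex (N : ℕ) (n : ℤ) (j : Fin 6) (k : ℤ) :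
    EuclideanSpace ℝ (Fin 3) :=
  match j with
  | 0 => !₂[armR N * Real.cos (armPhi N (2 * k)),
           armR N * Real.sin (armPhi N (2 * k)),
           2 * n * armH N]
  | 1 => !₂[armR N * Real.cos (armBeta N - armAlpha N + armPhi N (2 * k)),
           armR N * Real.sin (armBeta N - armAlpha N + armPhi N (2 * k)),
           (2 * n + 1) * armH N]
  | 2 => !₂[armR N * Real.cos (armPhi N (2 * k + 1)),
           armR N * Real.sin (armPhi N (2 * k + 1)),
           (2 * n + 1) * armH N]
  | 3 => !₂[armR N * Real.cos (2 * armBeta N + armPhi N (2 * k)),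
           armR N * Real.sin (2 * armBeta N + armPhi N (2 * k)),
           2 * n * armH N]
  | 4 => !₂[armR N * Real.cos (armBeta N - armAlpha N + armPhi N (2 * k)),
           armR N * Real.sin (armBeta N - armAlpha N + armPhi N (2 * k)),
           (2 * n + 1) * armH N]
  | 5 => !₂[armR N * Real.cos (armPhi N (2 * k + 1)),
           armR N * Real.sin (armPhi N (2 * k + 1)),
           (2 * n + 1) * armH N]

/-- The edge vector `e_{n,j,k}` of the armchair graph `Γ^N`; `j : Fin 6`
encodes the index `j+1 ∈ {1,…,6}` of the paper. -/
noncomputable def armEdge (N : ℕ) (n : ℤ) (j : Fin 6) (k : ℤ) :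
    EuclideanSpace ℝ (Fin 3) :=
  match j with
  | 0 => armVertex N n 1 k - armVertex N n 0 k
  | 1 => armVertex N n 2 k - armVertex N n 1 k
  | 2 => armVertex N n 3 k - armVertex N n 2 k
  | 3 => armVertex N n 0 (k + 1) - armVertex N n 3 k
  | 4 => armVertex N (n + 1) 0 k - armVertex N n 4 k
  | 5 => armVertex N (n + 1) 3 k - armVertex N n 5 k

open Real in
lemma arm_basic (N : ℕ) (hN : 2 ≤ N) :
    0 < Real.sin (Real.pi / N) ∧ 0 ≤ Real.cos (Real.pi / N) := by
  have hN0 : (0:ℝ) < N := by exact_mod_cast Nat.lt_of_lt_of_le Nat.zero_lt_two hN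
  have h2 : (2:ℝ) ≤ N := by exact_mod_cast hN
  have hpi := Real.pi_pos
  constructor
  · apply Real.sin_pos_of_pos_of_lt_pi
    · positivity
    · rw [div_lt_iff₀ hN0]; nlinarith
  · apply Real.cos_nonneg_of_mem_Icc
    constructor
    · have : (0:ℝ) ≤ Real.pi / N := by positivity
      linarith [this, hpi]
    · rw [div_le_div_iff₀ hN0 two_pos]; nlinarith

lemma arm_R_pos (N : ℕ) (hN : 2 ≤ N) : 0 < armR N := by
  obtain ⟨hs, hc⟩ := arm_basic N hN
  have h1 : (0:ℝ) < Real.cos (Real.pi / N) + 5/4 := by nlinarith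
  exact div_pos (Real.sqrt_pos.mpr h1) hs

lemma arm_h2 (N : ℕ) (hN : 2 ≤ N) : Real.sin (Real.pi / N) ^ 2 * (armR N) ^ 2
    = Real.cos (Real.pi / N) + 5/4 := by
  obtain ⟨hs, hc⟩ := arm_basic N hN
  have h1 : (0:ℝ) ≤ Real.cos (Real.pi / N) + 5/4 := by nlinarith
  rw [armR, div_pow, Real.sq_sqrt h1]
  field_simp

lemma arm_R_one_lt (N : ℕ) (hN : 2 ≤ N) : 1 < armR N := by
  obtain ⟨hs, hc⟩ := arm_basic N hN
  have h2 := arm_h2 N hN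
  have hpy := Real.sin_sq_add_cos_sq (Real.pi / N)
  have hR := arm_R_pos N hN
  nlinarith [sq_nonneg (Real.cos (Real.pi / N)), sq_nonneg (armR N - 1), Real.sin_le_one (Real.pi / N)]

lemma arm_r1_eq (N : ℕ) (hN : 2 ≤ N) :
    Real.sin (Real.pi / N) * armR1 N = Real.cos (Real.pi / N) + 1/2 := by
  obtain ⟨hs, hc⟩ := arm_basic N hN
  have h2 := arm_h2 N hN
  have hpy := Real.sin_sq_add_cos_sq (Real.pi / N)
  have hkey : (armR N) ^ 2 - 1
      = ((Real.cos (Real.pi / N) + 1/2) / Real.sin (Real.pi / N)) ^ 2 := by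
    field_simp
    nlinarith
  rw [armR1, hkey, Real.sqrt_sq (by positivity)]
  field_simp

lemma arm_r2_eq (N : ℕ) (hN : 2 ≤ N) :
    Real.sin (Real.pi / N) * armR2 N = Real.cos (Real.pi / N) + 2 := by
  obtain ⟨hs, hc⟩ := arm_basic N hN
  have h2 := arm_h2 N hN
  have hpy := Real.sin_sq_add_cos_sq (Real.pi / N)
  have hkey : 4 * (armR N) ^ 2 - 1
      = ((Real.cos (Real.pi / N) + 2) / Real.sin (Real.pi / N)) ^ 2 := by
    field_simp
    nlinarith
  rw [armR2, hkey, Real.sqrt_sq (by positivity)]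
  field_simp

lemma arm_r2_sq (N : ℕ) (hN : 2 ≤ N) : (armR2 N) ^ 2 = 4 * (armR N) ^ 2 - 1 :=
  Real.sq_sqrt (by nlinarith [arm_R_one_lt N hN, arm_R_pos N hN])

lemma arm_h_sq (N : ℕ) (hN : 2 ≤ N) :
    (armH N) ^ 2 = 2 + armR1 N * armR2 N - 2 * (armR N) ^ 2 := by
  apply Real.sq_sqrt
  obtain ⟨hs, hc⟩ := arm_basic N hN
  have h2 := arm_h2 N hN
  have hpy := Real.sin_sq_add_cos_sq (Real.pi / N)
  have hc1 : Real.cos (Real.pi / N) ≤ 1 := Real.cos_le_one _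
  have h3 := arm_r1_eq N hN
  have h4 := arm_r2_eq N hN
  nlinarith [sq_nonneg (Real.sin (Real.pi / N)), mul_pos hs hs]

lemma arm_sinB (N : ℕ) (hN : 2 ≤ N) : armR N * Real.sin (armBeta N) = 1 := by
  have hR := arm_R_pos N hN
  have hR1 := arm_R_one_lt N hN
  have h0 : (0:ℝ) < 1 / armR N := by positivity
  rw [armBeta, Real.sin_arcsin (by linarith) (by rw [div_le_one hR]; linarith)]
  field_simp

lemma arm_sinA (N : ℕ) (hN : 2 ≤ N) : 2 * armR N * Real.sin (armAlpha N) = 1 := by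
  have hR := arm_R_pos N hN
  have hR1 := arm_R_one_lt N hN
  have h0 : (0:ℝ) < 1 / (2 * armR N) := by positivity
  rw [armAlpha, Real.sin_arcsin (by linarith) (by rw [div_le_one (by linarith)]; linarith)]
  field_simp

lemma arm_cosB (N : ℕ) (hN : 2 ≤ N) : armR N * Real.cos (armBeta N) = armR1 N := by
  have hR := arm_R_pos N hN
  have hR1 := arm_R_one_lt N hN
  rw [armBeta, Real.cos_arcsin, armR1]
  rw [show (1:ℝ) - (1 / armR N) ^ 2 = ((armR N)^2 - 1) / (armR N)^2 by field_simp]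
  rw [Real.sqrt_div (by nlinarith) ((armR N)^2), Real.sqrt_sq hR.le]
  field_simp

lemma arm_cosA (N : ℕ) (hN : 2 ≤ N) : 2 * armR N * Real.cos (armAlpha N) = armR2 N := by
  have hR := arm_R_pos N hN
  have hR1 := arm_R_one_lt N hN
  rw [armAlpha, Real.cos_arcsin, armR2]
  rw [show (1:ℝ) - (1 / (2 * armR N)) ^ 2 = (4 * (armR N)^2 - 1) / (2 * armR N)^2 by field_simp; ring]
  rw [Real.sqrt_div (by nlinarith) ((2 * armR N)^2), Real.sqrt_sq (by positivity)]
  field_simp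

lemma arm_AB (N : ℕ) (hN : 2 ≤ N) : armAlpha N + armBeta N = Real.pi / N := by
  obtain ⟨hs, hc⟩ := arm_basic N hN
  have hR := arm_R_pos N hN
  have hR1 := arm_R_one_lt N hN
  have h2 := arm_h2 N hN
  have h3 := arm_r1_eq N hN
  have h4 := arm_r2_eq N hN
  have h6 := arm_sinA N hN
  have h7 := arm_cosA N hN
  have h8 := arm_sinB N hN
  have h9 := arm_cosB N hN
  have hpy := Real.sin_sq_add_cos_sq (Real.pi / N)
  have key : armR1 N * armR2 N - 1 = 2 * (armR N)^2 * Real.cos (Real.pi / N) := by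
    apply mul_left_cancel₀ (pow_ne_zero 2 hs.ne')
    linear_combination (Real.sin (Real.pi / N) * armR2 N) * h3
      + (Real.cos (Real.pi / N) + 1/2) * h4 - hpy - 2 * Real.cos (Real.pi / N) * h2
  have hcos : Real.cos (armAlpha N + armBeta N) = Real.cos (Real.pi / N) := by
    rw [Real.cos_add]
    apply mul_left_cancel₀ (by positivity : (2 * (armR N)^2 : ℝ) ≠ 0)
    linear_combination (armR N * Real.cos (armBeta N)) * h7 + armR2 N * h9
      - (armR N * Real.sin (armBeta N)) * h6 - h8 + key
  have hA0 : 0 ≤ armAlpha N := Real.arcsin_nonneg.mpr (by positivity)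
  have hB0 : 0 ≤ armBeta N := Real.arcsin_nonneg.mpr (by positivity)
  have hA2 : armAlpha N ≤ Real.pi / 2 := Real.arcsin_le_pi_div_two _
  have hB2 : armBeta N ≤ Real.pi / 2 := Real.arcsin_le_pi_div_two _
  have hN0 : (0:ℝ) < N := by exact_mod_cast Nat.lt_of_lt_of_le Nat.zero_lt_two hN
  have hNpi : 0 ≤ Real.pi / N := by positivity
  have hNpi2 : Real.pi / N ≤ Real.pi := by
    rw [div_le_iff₀ hN0]
    have h1N : (1:ℝ) ≤ N := by exact_mod_cast Nat.one_le_of_lt (Nat.lt_of_lt_of_le Nat.one_lt_two hN)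
    nlinarith [Real.pi_pos, mul_le_mul_of_nonneg_left h1N Real.pi_pos.le]
  exact Real.injOn_cos ⟨by linarith, by linarith⟩ ⟨hNpi, hNpi2⟩ hcos

lemma arm_key1 (N : ℕ) (hN : 2 ≤ N) :
    2 * (armR N)^2 * (1 - Real.cos (armBeta N - armAlpha N)) + (armH N)^2 = 1 := by
  have h5 := arm_h_sq N hN
  have h6 := arm_sinA N hN
  have h7 := arm_cosA N hN
  have h8 := arm_sinB N hN
  have h9 := arm_cosB N hN
  rw [Real.cos_sub]
  linear_combination h5 - (2 * armR N * Real.cos (armAlpha N)) * h9 - armR1 N * h7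
    - (2 * armR N * Real.sin (armAlpha N)) * h8 - h6

lemma arm_key2 (N : ℕ) (hN : 2 ≤ N) :
    2 * (armR N)^2 * (1 - Real.cos (2 * armAlpha N)) = 1 := by
  have h7 := arm_cosA N hN
  have hr2 := arm_r2_sq N hN
  rw [Real.cos_two_mul]
  linear_combination -hr2 - (2 * armR N * Real.cos (armAlpha N) + armR2 N) * h7

/-- Every edge of the armchair nanotube graph `Γ^N` has Euclidean length 1. -/
theorem armchair_edge_length_one (N : ℕ) (hN : 2 ≤ N) (n k : ℤ) (j : Fin 6) :
    ‖armEdge N n j k‖ = 1 := by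
  have hAB := arm_AB N hN
  have K1 := arm_key1 N hN
  have K2 := arm_key2 N hN
  apply norm_eq_one_of
  fin_cases j
  · show (armR N * Real.cos (armBeta N - armAlpha N + armPhi N (2*k))
        - armR N * Real.cos (armPhi N (2*k)))^2
      + (armR N * Real.sin (armBeta N - armAlpha N + armPhi N (2*k))
        - armR N * Real.sin (armPhi N (2*k)))^2
      + ((2*(n:ℝ)+1) * armH N - 2*(n:ℝ) * armH N)^2 = 1
    rw [chord_sq,
      show armBeta N - armAlpha N + armPhi N (2*k) - armPhi N (2*k)
        = armBeta N - armAlpha N from by ring,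
      show (2*(n:ℝ)+1) * armH N - 2*(n:ℝ) * armH N = armH N from by ring]
    exact K1
  · show (armR N * Real.cos (armPhi N (2*k+1))
        - armR N * Real.cos (armBeta N - armAlpha N + armPhi N (2*k)))^2
      + (armR N * Real.sin (armPhi N (2*k+1))
        - armR N * Real.sin (armBeta N - armAlpha N + armPhi N (2*k)))^2
      + ((2*(n:ℝ)+1) * armH N - (2*(n:ℝ)+1) * armH N)^2 = 1
    rw [chord_sq,
      show armPhi N (2*k+1) - (armBeta N - armAlpha N + armPhi N (2*k))
        = 2 * armAlpha N from by
          simp only [armPhi]; push_cast; linear_combination (-1 : ℝ) * hAB,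
      show ((2*(n:ℝ)+1) * armH N - (2*(n:ℝ)+1) * armH N)^2 = 0 from by ring]
    linarith [K2]
  · show (armR N * Real.cos (2 * armBeta N + armPhi N (2*k))
        - armR N * Real.cos (armPhi N (2*k+1)))^2
      + (armR N * Real.sin (2 * armBeta N + armPhi N (2*k))
        - armR N * Real.sin (armPhi N (2*k+1)))^2
      + (2*(n:ℝ) * armH N - (2*(n:ℝ)+1) * armH N)^2 = 1
    rw [chord_sq,
      show 2 * armBeta N + armPhi N (2*k) - armPhi N (2*k+1)
        = armBeta N - armAlpha N from by
          simp only [armPhi]; push_cast; linear_combination hAB,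
      show (2*(n:ℝ) * armH N - (2*(n:ℝ)+1) * armH N)^2 = armH N ^ 2 from by ring]
    exact K1
  · show (armR N * Real.cos (armPhi N (2*(k+1)))
        - armR N * Real.cos (2 * armBeta N + armPhi N (2*k)))^2
      + (armR N * Real.sin (armPhi N (2*(k+1)))
        - armR N * Real.sin (2 * armBeta N + armPhi N (2*k)))^2
      + (2*(n:ℝ) * armH N - 2*(n:ℝ) * armH N)^2 = 1
    rw [chord_sq,
      show armPhi N (2*(k+1)) - (2 * armBeta N + armPhi N (2*k))
        = 2 * armAlpha N from by
          simp only [armPhi]; push_cast; linear_combination (-2 : ℝ) * hAB,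
      show (2*(n:ℝ) * armH N - 2*(n:ℝ) * armH N)^2 = 0 from by ring]
    linarith [K2]
  · show (armR N * Real.cos (armPhi N (2*k))
        - armR N * Real.cos (armBeta N - armAlpha N + armPhi N (2*k)))^2
      + (armR N * Real.sin (armPhi N (2*k))
        - armR N * Real.sin (armBeta N - armAlpha N + armPhi N (2*k)))^2
      + (2*(((n+1 : ℤ) : ℝ)) * armH N - (2*(n:ℝ)+1) * armH N)^2 = 1
    rw [chord_sq,
      show armPhi N (2*k) - (armBeta N - armAlpha N + armPhi N (2*k))
        = -(armBeta N - armAlpha N) from by ring,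
      Real.cos_neg,
      show (2*(((n+1 : ℤ) : ℝ)) * armH N - (2*(n:ℝ)+1) * armH N)^2 = armH N ^ 2 from by
        push_cast; ring]
    exact K1
  · show (armR N * Real.cos (2 * armBeta N + armPhi N (2*k))
        - armR N * Real.cos (armPhi N (2*k+1)))^2
      + (armR N * Real.sin (2 * armBeta N + armPhi N (2*k))
        - armR N * Real.sin (armPhi N (2*k+1)))^2
      + (2*(((n+1 : ℤ) : ℝ)) * armH N - (2*(n:ℝ)+1) * armH N)^2 = 1
    rw [chord_sq,
      show 2 * armBeta N + armPhi N (2*k) - armPhi N (2*k+1)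
        = armBeta N - armAlpha N from by
          simp only [armPhi]; push_cast; linear_combination hAB,
      show (2*(((n+1 : ℤ) : ℝ)) * armH N - (2*(n:ℝ)+1) * armH N)^2 = armH N ^ 2 from by
        push_cast; ring]
    exact K1
end

section
/- For every integer N ≥ 2, with R = √(cos(π/N) + 5/4)/sin(π/N), the angles α = arcsin(1/(2R)) and β = arcsin(1/R) satisfy 0 < α < β and α + β = π/N. -/
/-- For every integer `N ≥ 2`, the angles `α = arcsin(1/(2R))` and `β = arcsin(1/R)`
satisfy `0 < α < β` and `α + β = π/N`. -/
theorem armchair_angle_identity (N : ℕ) (hN : 2 ≤ N) :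
    0 < Real.arcsin (1 / (2 * armR N)) ∧
    Real.arcsin (1 / (2 * armR N)) < Real.arcsin (1 / armR N) ∧
    Real.arcsin (1 / (2 * armR N)) + Real.arcsin (1 / armR N) = Real.pi / N := by
  have hN2 : (2 : ℝ) ≤ N := by exact_mod_cast hN
  have hNpos : (0 : ℝ) < N := by linarith
  set φ : ℝ := Real.pi / N with hφdef
  have hφ0 : 0 < φ := div_pos Real.pi_pos hNpos
  have hφle : φ ≤ Real.pi / 2 :=
    div_le_div_of_nonneg_left Real.pi_pos.le (by norm_num) hN2
  have hφlt : φ < Real.pi := lt_of_le_of_lt hφle (half_lt_self Real.pi_pos)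
  have hs : 0 < Real.sin φ := Real.sin_pos_of_pos_of_lt_pi hφ0 hφlt
  have hc : 0 ≤ Real.cos φ := Real.cos_nonneg_of_mem_Icc ⟨by linarith, hφle⟩
  set s := Real.sin φ with hsdef
  set c := Real.cos φ with hcdef
  have hsc : s ^ 2 = 1 - c ^ 2 := by
    have := Real.sin_sq_add_cos_sq φ; nlinarith
  have hc54 : (0 : ℝ) ≤ c + 5 / 4 := by linarith
  set R : ℝ := armR N with hRdef
  have hR0 : 0 < R := div_pos (Real.sqrt_pos.mpr (by linarith)) hs
  have hRs : R * s = Real.sqrt (c + 5 / 4) := by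
    rw [hRdef]
    exact div_mul_cancel₀ _ hs.ne'
  have hRsq : R ^ 2 * s ^ 2 = c + 5 / 4 := by
    calc R ^ 2 * s ^ 2 = (R * s) ^ 2 := by ring
    _ = Real.sqrt (c + 5 / 4) ^ 2 := by rw [hRs]
    _ = c + 5 / 4 := Real.sq_sqrt hc54
  clear_value R s c
  clear hRs
  have hR1 : 1 < R := by nlinarith
  have h1R : 1 / R < 1 := by rw [div_lt_one hR0]; exact hR1
  have h1Rpos : 0 < 1 / R := by positivity
  have h12pos : 0 < 1 / (2 * R) := by positivity
  have hlt : 1 / (2 * R) < 1 / R := by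
    rw [div_lt_div_iff₀ (by positivity) hR0]; nlinarith
  set β : ℝ := Real.arcsin (1 / R) with hβdef
  have hsinβ : Real.sin β = 1 / R := Real.sin_arcsin (by linarith) h1R.le
  have hβpos : 0 < β := Real.arcsin_pos.mpr h1Rpos
  have hβle : β ≤ Real.pi / 2 := Real.arcsin_le_pi_div_two _
  have hcosβ : Real.cos β = (c + 1 / 2) / (s * R) := by
    rw [hβdef, Real.cos_arcsin]
    have hkey : 1 - (1 / R) ^ 2 = ((c + 1 / 2) / (s * R)) ^ 2 := by
      field_simp
      nlinarith
    rw [hkey, Real.sqrt_sq (by positivity)]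
  have hsin_sub : Real.sin (φ - β) = 1 / (2 * R) := by
    rw [Real.sin_sub, hcosβ, hsinβ, ← hsdef, ← hcdef]
    field_simp
    ring
  have harc : Real.arcsin (1 / (2 * R)) = φ - β := by
    rw [← hsin_sub, Real.arcsin_sin (by linarith) (by linarith)]
  refine ⟨Real.arcsin_pos.mpr h12pos, ?_, ?_⟩
  · exact Real.strictMonoOn_arcsin ⟨by linarith, by linarith⟩ ⟨by linarith, h1R.le⟩ hlt
  · rw [harc]; ring
end

section
/- For every integer N ≥ 2, with R = √(cos(π/N) + 5/4)/sin(π/N), the identity √(R² − 1) · √(4R² − 1) = 2R² cos(π/N) + 1 holds; equivalently R₁R₂ = 2R² cos φ₁ + 1 and hence h² = 2 + R₁R₂ − 2R² = 3 − 2R²(1 − cos(π/N)) ≥ 0. -/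
set_option maxHeartbeats 1000000 in
/-- For every `N ≥ 2`: `√(R²−1)·√(4R²−1) = 2R²cos(π/N) + 1`, hence
`h² = 2 + R₁R₂ − 2R² = 3 − 2R²(1 − cos(π/N)) ≥ 0`. -/
theorem armchair_R1R2_identity (N : ℕ) (hN : 2 ≤ N) :
    Real.sqrt ((armR N) ^ 2 - 1) * Real.sqrt (4 * (armR N) ^ 2 - 1) =
      2 * (armR N) ^ 2 * Real.cos (Real.pi / N) + 1 ∧
    2 + Real.sqrt ((armR N) ^ 2 - 1) * Real.sqrt (4 * (armR N) ^ 2 - 1) -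
        2 * (armR N) ^ 2 =
      3 - 2 * (armR N) ^ 2 * (1 - Real.cos (Real.pi / N)) ∧
    0 ≤ 3 - 2 * (armR N) ^ 2 * (1 - Real.cos (Real.pi / N)) := by
  have hN2 : (2:ℝ) ≤ N := by exact_mod_cast hN
  have hNpos : (0:ℝ) < N := by linarith
  set φ := Real.pi / N with hφdef
  have hφ0 : 0 < φ := div_pos Real.pi_pos hNpos
  have hφπ2 : φ ≤ Real.pi / 2 := by
    rw [hφdef]
    apply div_le_div_of_nonneg_left Real.pi_pos.le two_pos hN2
  set c := Real.cos φ with hcdef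
  set s := Real.sin φ with hsdef
  have hs : 0 < s := Real.sin_pos_of_pos_of_lt_pi hφ0
    (lt_of_le_of_lt hφπ2 (by linarith [Real.pi_pos]))
  have hc0 : 0 ≤ c := Real.cos_nonneg_of_mem_Icc ⟨by linarith, hφπ2⟩
  have hc1 : c ≤ 1 := Real.cos_le_one φ
  have hpyth : s ^ 2 + c ^ 2 = 1 := Real.sin_sq_add_cos_sq φ
  have hR2 : armR N ^ 2 = (c + 5 / 4) / s ^ 2 := by
    rw [armR, div_pow, Real.sq_sqrt (by positivity)]
  have hA : armR N ^ 2 - 1 = ((c + 1 / 2) / s) ^ 2 := by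
    rw [hR2]
    field_simp
    nlinarith [hpyth]
  have hB : 4 * armR N ^ 2 - 1 = ((c + 2) / s) ^ 2 := by
    rw [hR2]
    field_simp
    nlinarith [hpyth]
  have hsq1 : Real.sqrt (armR N ^ 2 - 1) = (c + 1 / 2) / s := by
    rw [hA, Real.sqrt_sq (by positivity)]
  have hsq2 : Real.sqrt (4 * armR N ^ 2 - 1) = (c + 2) / s := by
    rw [hB, Real.sqrt_sq (by positivity)]
  have hmain : Real.sqrt (armR N ^ 2 - 1) * Real.sqrt (4 * armR N ^ 2 - 1) =
      2 * armR N ^ 2 * c + 1 := by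
    rw [hsq1, hsq2, hR2]
    field_simp
    nlinarith [hpyth]
  have hpos : 0 ≤ 3 - 2 * armR N ^ 2 * (1 - c) := by
    have key : 3 - 2 * armR N ^ 2 * (1 - c) = (1 - c) * (c + 1 / 2) / s ^ 2 := by
      rw [hR2]
      field_simp
      linear_combination 24 * hpyth
    rw [key]
    apply div_nonneg _ (sq_nonneg s)
    nlinarith
  exact ⟨hmain, by linarith [hmain], hpos⟩
end

section
/- Let M be a 4×4 complex matrix satisfying Mᵀ J M = J. Then there exist complex numbers F₁, F₂ with F₁ + F₂ = (Tr M)/2 and F₁·F₂ = ((Tr M)² − Tr(M²) − 4)/8 such that for every τ ∈ ℂ one has det(M − τ·I₄) = (τ² − 2F₁τ + 1)(τ² − 2F₂τ + 1). -/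
/-- The matrix `J = [[0, j], [−j, 0]]` with `j = [[0,1],[1,0]]`. -/
noncomputable def Jmat : Matrix (Fin 4) (Fin 4) ℂ :=
  Matrix.of ![![0, 0, 0, 1], ![0, 0, 1, 0], ![0, -1, 0, 0], ![-1, 0, 0, 0]]

lemma detFour (A : Matrix (Fin 4) (Fin 4) ℂ) : A.det =
    A 0 0*A 1 1*A 2 2*A 3 3 - A 0 0*A 1 1*A 2 3*A 3 2 - A 0 0*A 1 2*A 2 1*A 3 3 + A 0 0*A 1 2*A 2 3*A 3 1 + A 0 0*A 1 3*A 2 1*A 3 2 - A 0 0*A 1 3*A 2 2*A 3 1 - A 0 1*A 1 0*A 2 2*A 3 3 + A 0 1*A 1 0*A 2 3*A 3 2 + A 0 1*A 1 2*A 2 0*A 3 3 - A 0 1*A 1 2*A 2 3*A 3 0 - A 0 1*A 1 3*A 2 0*A 3 2 + A 0 1*A 1 3*A 2 2*A 3 0 + A 0 2*A 1 0*A 2 1*A 3 3 - A 0 2*A 1 0*A 2 3*A 3 1 - A 0 2*A 1 1*A 2 0*A 3 3 + A 0 2*A 1 1*A 2 3*A 3 0 + A 0 2*A 1 3*A 2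 0*A 3 1 - A 0 2*A 1 3*A 2 1*A 3 0 - A 0 3*A 1 0*A 2 1*A 3 2 + A 0 3*A 1 0*A 2 2*A 3 1 + A 0 3*A 1 1*A 2 0*A 3 2 - A 0 3*A 1 1*A 2 2*A 3 0 - A 0 3*A 1 2*A 2 0*A 3 1 + A 0 3*A 1 2*A 2 1*A 3 0 := by
  simp (config := { decide := true }) [Matrix.det_succ_row_zero, Fin.sum_univ_succ,
    Matrix.submatrix_apply, Fin.succAbove,
    show (Fin.succ 2 : Fin 4) = 3 from rfl, show ((2 : Fin 3).castSucc : Fin 4) = 2 from rfl]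
  ring

lemma JJ : Jmat * Jmat = -1 := by
  ext i j
  fin_cases i <;> fin_cases j <;>
    simp (config := { decide := true }) [Jmat, Matrix.mul_apply, Fin.sum_univ_four,
      Matrix.one_apply, Matrix.vecHead, Matrix.vecTail]

set_option maxRecDepth 20000 in
set_option maxHeartbeats 2000000 in
/-- If `Mᵀ J M = J` then there are `F₁, F₂` with `F₁ + F₂ = Tr M / 2` and
`F₁F₂ = ((Tr M)² − Tr(M²) − 4)/8` such that
`det(M − τI₄) = (τ² − 2F₁τ + 1)(τ² − 2F₂τ + 1)` for all `τ`. -/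
theorem charpoly_factorization_of_J_symplectic (M : Matrix (Fin 4) (Fin 4) ℂ)
    (hM : M.transpose * Jmat * M = Jmat) :
    ∃ F₁ F₂ : ℂ, F₁ + F₂ = M.trace / 2 ∧
      F₁ * F₂ = (M.trace ^ 2 - (M * M).trace - 4) / 8 ∧
      ∀ τ : ℂ, (M - τ • (1 : Matrix (Fin 4) (Fin 4) ℂ)).det =
        (τ ^ 2 - 2 * F₁ * τ + 1) * (τ ^ 2 - 2 * F₂ * τ + 1) := by
  obtain ⟨d, hd⟩ := IsAlgClosed.exists_pow_nat_eq
    ((M.trace / 2) ^ 2 - 4 * ((M.trace ^ 2 - (M * M).trace - 4) / 8)) zero_lt_two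
  refine ⟨(M.trace / 2 + d) / 2, (M.trace / 2 - d) / 2, by ring,
    by linear_combination (-(1:ℂ)/4) * hd, ?_⟩
  -- entry equations from hM
  have e01 : (M.transpose * Jmat * M) 0 1 = Jmat 0 1 := by rw [hM]
  have e02 : (M.transpose * Jmat * M) 0 2 = Jmat 0 2 := by rw [hM]
  have e03 : (M.transpose * Jmat * M) 0 3 = Jmat 0 3 := by rw [hM]
  have e12 : (M.transpose * Jmat * M) 1 2 = Jmat 1 2 := by rw [hM]
  have e13 : (M.transpose * Jmat * M) 1 3 = Jmat 1 3 := by rw [hM]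
  have e23 : (M.transpose * Jmat * M) 2 3 = Jmat 2 3 := by rw [hM]
  simp only [Matrix.mul_apply, Fin.sum_univ_four, Matrix.transpose_apply, Jmat,
    Matrix.of_apply, Matrix.cons_val', Matrix.cons_val_zero, Matrix.cons_val_one,
    Matrix.head_cons, Matrix.empty_val', Matrix.cons_val_fin_one, Matrix.head_fin_const,
    Matrix.cons_val_two, Matrix.cons_val_three, Matrix.tail_cons, zero_mul, one_mul,
    neg_mul, mul_zero, mul_one, mul_neg, add_zero, zero_add, neg_zero] at e01 e02 e03 e12 e13 e23
  -- det M = 1 via the Pfaffian identity Pf(MᵀJM) = det M · Pf(J)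
  have hdet : M.det = 1 := by
    rw [detFour]
    linear_combination (M 0 2 * M 3 3 + M 1 2 * M 2 3 - M 2 2 * M 1 3 - M 3 2 * M 0 3) * e01
      - (M 0 0 * M 3 2 + M 1 0 * M 2 2 - M 2 0 * M 1 2 - M 3 0 * M 0 2) * e13
      + (M 0 0 * M 3 3 + M 1 0 * M 2 3 - M 2 0 * M 1 3 - M 3 0 * M 0 3) * e12 + e03
  -- inverse of M
  have hinv : (-(Jmat * M.transpose * Jmat)) * M = 1 := by
    have h : (Jmat * M.transpose * Jmat) * M = -1 := by
      rw [mul_assoc, mul_assoc, ← mul_assoc M.transpose, hM, JJ]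
    rw [Matrix.neg_mul, h, neg_neg]
  have hMMinv : M * (-(Jmat * M.transpose * Jmat)) = 1 := mul_eq_one_comm.mp hinv
  have hdetMinv : (-(Jmat * M.transpose * Jmat)).det = 1 := by
    have h := congrArg Matrix.det hinv
    rw [Matrix.det_mul, hdet, mul_one, Matrix.det_one] at h
    exact h
  have hdetJ : Jmat.det = 1 := by
    rw [detFour]
    simp (config := { decide := true }) [Jmat]
  have hdetnegJ : (-Jmat).det = 1 := by
    have : (-Jmat) = (-1 : ℂ) • Jmat := by simp
    rw [this, Matrix.det_smul, hdetJ]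
    norm_num
  -- functional equation at τ = 2
  have key : (M - (2:ℂ) • 1) * (-(Jmat * M.transpose * Jmat)) =
      (-Jmat) * (1 - (2:ℂ) • M.transpose) * Jmat := by
    have h2 : (-Jmat) * Jmat = 1 := by rw [Matrix.neg_mul, JJ, neg_neg]
    rw [Matrix.sub_mul, hMMinv, Matrix.smul_mul, Matrix.one_mul, Matrix.mul_sub,
      Matrix.mul_one, Matrix.sub_mul, h2, mul_smul_comm, smul_mul_assoc, Matrix.neg_mul,
      Matrix.neg_mul, smul_neg]
  have htwo : (M - (2:ℂ) • 1).det = (1 - (2:ℂ) • M.transpose).det := by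
    have h := congrArg Matrix.det key
    rw [Matrix.det_mul, Matrix.det_mul, Matrix.det_mul, hdetMinv, hdetnegJ, hdetJ,
      mul_one, one_mul, mul_one] at h
    exact h
  -- expand everything into entries
  intro τ
  rw [detFour, detFour] at htwo
  have hdetE := hdet
  rw [detFour] at hdetE
  rw [detFour]
  simp (config := { decide := true }) only [Matrix.sub_apply, Matrix.smul_apply,
    Matrix.one_apply, Matrix.transpose_apply, smul_eq_mul, Matrix.trace, Matrix.diag,
    Fin.sum_univ_four, Matrix.mul_apply, if_true, if_false, mul_one, mul_zero,
    sub_zero] at htwo hd ⊢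
  linear_combination ((1:ℂ) - 15 * τ / 6) * hdetE - (τ / 6) * htwo + τ ^ 2 * hd
end

section
/- Let F, F₋, c, s be real numbers with c² + s² = 1. Define ξ = (9F² − F₋² − 1)/2 − s² and ρ = (9F² − s²)c² + s²·F₋². Define T₀ = 2(9F² − F₋² − 1), T₁ = T₀ − 4s², S₀ = 72F² + T₀²/2 − 4, and T₂ = S₀ − 8s²·T₀ − 16s²c². Then 4ξ = T₁ and 8(ξ² − ρ) = T₁² − T₂ − 4. Consequently, for every τ ∈ ℂ, if ρ ≥ 0 then τ⁴ − T₁τ³ + ((T₁² − T₂)/2)τ² − T₁τ + 1 = (τ² − 2(ξ + √ρ)τ + 1)(τ² − 2(ξ − √ρ)τ + 1). -/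
/-- Algebraic core of identity (1.11): the Lyapunov branches `ξ ± √ρ` factor the
self-reciprocal polynomial built from the traces `T₁ = Tr M_k`, `T₂ = Tr M_k²`. -/
theorem lyapunov_trace_identities (F Fm c s ξ ρ T₀ T₁ S₀ T₂ : ℝ)
    (hcs : c ^ 2 + s ^ 2 = 1)
    (hξ : ξ = (9 * F ^ 2 - Fm ^ 2 - 1) / 2 - s ^ 2)
    (hρ : ρ = (9 * F ^ 2 - s ^ 2) * c ^ 2 + s ^ 2 * Fm ^ 2)
    (hT₀ : T₀ = 2 * (9 * F ^ 2 - Fm ^ 2 - 1))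
    (hT₁ : T₁ = T₀ - 4 * s ^ 2)
    (hS₀ : S₀ = 72 * F ^ 2 + T₀ ^ 2 / 2 - 4)
    (hT₂ : T₂ = S₀ - 8 * s ^ 2 * T₀ - 16 * s ^ 2 * c ^ 2) :
    4 * ξ = T₁ ∧ 8 * (ξ ^ 2 - ρ) = T₁ ^ 2 - T₂ - 4 ∧
      ∀ τ : ℂ, 0 ≤ ρ →
        τ ^ 4 - (T₁ : ℂ) * τ ^ 3 + (((T₁ ^ 2 - T₂) / 2 : ℝ) : ℂ) * τ ^ 2
            - (T₁ : ℂ) * τ + 1 =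
          (τ ^ 2 - 2 * ((ξ : ℂ) + (Real.sqrt ρ : ℂ)) * τ + 1) *
            (τ ^ 2 - 2 * ((ξ : ℂ) - (Real.sqrt ρ : ℂ)) * τ + 1) := by
  have h1 : 4 * ξ = T₁ := by subst hξ hρ hT₀ hT₁ hS₀ hT₂; ring
  have h2 : 8 * (ξ ^ 2 - ρ) = T₁ ^ 2 - T₂ - 4 := by
    subst hξ hρ hT₀ hT₁ hS₀ hT₂
    nlinarith [sq_nonneg c, sq_nonneg s, hcs]
  refine ⟨h1, h2, fun τ hρ0 => ?_⟩
  have hsq : ((Real.sqrt ρ : ℂ)) ^ 2 = (ρ : ℂ) := by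
    norm_cast
    exact Real.sq_sqrt hρ0
  have e1 : (T₁ : ℂ) = 4 * (ξ : ℂ) := by exact_mod_cast h1.symm
  have e2 : (((T₁ ^ 2 - T₂) / 2 : ℝ) : ℂ) = 4 * (ξ : ℂ) ^ 2 - 4 * (ρ : ℂ) + 2 := by
    have : (T₁ ^ 2 - T₂) / 2 = 4 * ξ ^ 2 - 4 * ρ + 2 := by linarith
    rw [this]; push_cast; ring
  rw [e1, e2]
  linear_combination (4 * τ ^ 2) * hsq
end

section
/- Let F, F₋, c, s be real numbers with c² + s² = 1. Define ξ = (9F² − F₋² − 1)/2 − s², ρ = (9F² − s²)c² + s²·F₋², g₁ = 5 + F₋² − 2√(F₋² + 4c²) and g₂ = 5 + F₋² + 2√(F₋² + 4c²). Then 4((ξ − 1)² − ρ) = (9F² − g₁)(9F² − g₂). Equivalently, when ρ ≥ 0, the quantity D⁺ = 4(F₁ − 1)(F₂ − 1) with F₁ = ξ + √ρ, F₂ = ξ − √ρ equals (9F² − g₁)(9F² − g₂). -/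
/-- Pointwise identity behind (2.10)–(2.11): `D⁺ = 4(F₁−1)(F₂−1) = (9F²−g₁)(9F²−g₂)`. -/
theorem Dplus_factorization (F Fm c s ξ ρ g₁ g₂ : ℝ)
    (hcs : c ^ 2 + s ^ 2 = 1)
    (hξ : ξ = (9 * F ^ 2 - Fm ^ 2 - 1) / 2 - s ^ 2)
    (hρ : ρ = (9 * F ^ 2 - s ^ 2) * c ^ 2 + s ^ 2 * Fm ^ 2)
    (hg₁ : g₁ = 5 + Fm ^ 2 - 2 * Real.sqrt (Fm ^ 2 + 4 * c ^ 2))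
    (hg₂ : g₂ = 5 + Fm ^ 2 + 2 * Real.sqrt (Fm ^ 2 + 4 * c ^ 2)) :
    4 * ((ξ - 1) ^ 2 - ρ) = (9 * F ^ 2 - g₁) * (9 * F ^ 2 - g₂) ∧
    (0 ≤ ρ →
      4 * ((ξ + Real.sqrt ρ) - 1) * ((ξ - Real.sqrt ρ) - 1) =
        (9 * F ^ 2 - g₁) * (9 * F ^ 2 - g₂)) := by
  have ht : Real.sqrt (Fm ^ 2 + 4 * c ^ 2) ^ 2 = Fm ^ 2 + 4 * c ^ 2 :=
    Real.sq_sqrt (by positivity)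
  have hs2 : s ^ 2 = 1 - c ^ 2 := by linarith
  have h1 : 4 * ((ξ - 1) ^ 2 - ρ) = (9 * F ^ 2 - g₁) * (9 * F ^ 2 - g₂) := by
    subst hξ hρ hg₁ hg₂
    rw [hs2]; nlinarith [ht]
  refine ⟨h1, fun hρ0 => ?_⟩
  have : 4 * ((ξ + Real.sqrt ρ) - 1) * ((ξ - Real.sqrt ρ) - 1)
      = 4 * ((ξ - 1) ^ 2 - ρ) := by
    have := Real.sq_sqrt hρ0
    nlinarith [this]
  rw [this, h1]
end

section
/- Let F, F₋, c, s be real numbers with c² + s² = 1. Define ξ = (9F² − F₋² − 1)/2 − s², ρ = (9F² − s²)c² + s²·F₋², h₁ = (1 − |F₋|)² and h₂ = (1 + |F₋|)². Then 4((ξ + 1)² − ρ) = (9F² − h₁)(9F² − h₂). Equivalently, when ρ ≥ 0, the quantity D⁻ = 4(F₁ + 1)(F₂ + 1) with F₁ = ξ + √ρ, F₂ = ξ − √ρ equals (9F² − h₁)(9F² − h₂); in particular this expression does not depend on c and s separately. -/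
/-- Pointwise identity behind (2.10)–(2.11): `D⁻ = 4(F₁+1)(F₂+1) = (9F²−h₁)(9F²−h₂)`,
which does not depend on `c` and `s` separately. -/
theorem Dminus_factorization (F Fm c s ξ ρ h₁ h₂ : ℝ)
    (hcs : c ^ 2 + s ^ 2 = 1)
    (hξ : ξ = (9 * F ^ 2 - Fm ^ 2 - 1) / 2 - s ^ 2)
    (hρ : ρ = (9 * F ^ 2 - s ^ 2) * c ^ 2 + s ^ 2 * Fm ^ 2)
    (hh₁ : h₁ = (1 - |Fm|) ^ 2)
    (hh₂ : h₂ = (1 + |Fm|) ^ 2) :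
    4 * ((ξ + 1) ^ 2 - ρ) = (9 * F ^ 2 - h₁) * (9 * F ^ 2 - h₂) ∧
    (0 ≤ ρ →
      4 * ((ξ + Real.sqrt ρ) + 1) * ((ξ - Real.sqrt ρ) + 1) =
        (9 * F ^ 2 - h₁) * (9 * F ^ 2 - h₂)) := by
  have habs : |Fm| ^ 2 = Fm ^ 2 := sq_abs Fm
  have hc2 : c ^ 2 = 1 - s ^ 2 := by linarith
  have h1 : 4 * ((ξ + 1) ^ 2 - ρ) = (9 * F ^ 2 - h₁) * (9 * F ^ 2 - h₂) := by
    subst hξ hρ hh₁ hh₂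
    rw [hc2]
    nlinarith [sq_abs Fm]
  refine ⟨h1, fun hρ0 => ?_⟩
  have hs : Real.sqrt ρ ^ 2 = ρ := Real.sq_sqrt hρ0
  nlinarith [h1, hs]
end

section
/- Let F, F₋, c, s be real numbers with c² + s² = 1, and define ξ = (9F² − F₋² − 1)/2 − s², ρ = (9F² − s²)c² + s²·F₋², g₁ = 5 + F₋² − 2√(F₋² + 4c²). Assume ρ > 0. Then ξ + √ρ < 1 if and only if 9F² < g₁. -/
set_option maxHeartbeats 1600000 in
/-- Lemma 3.1, case ν = 1 of relation (3.1): `F₁ = ξ + √ρ < 1` iff `9F² < g₁`. -/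
theorem lyapunov_branch1_lt_one (F Fm c s ξ ρ g₁ : ℝ)
    (hcs : c ^ 2 + s ^ 2 = 1)
    (hξ : ξ = (9 * F ^ 2 - Fm ^ 2 - 1) / 2 - s ^ 2)
    (hρ : ρ = (9 * F ^ 2 - s ^ 2) * c ^ 2 + s ^ 2 * Fm ^ 2)
    (hg₁ : g₁ = 5 + Fm ^ 2 - 2 * Real.sqrt (Fm ^ 2 + 4 * c ^ 2))
    (hρpos : 0 < ρ) :
    ξ + Real.sqrt ρ < 1 ↔ 9 * F ^ 2 < g₁ := by
  obtain ⟨B, hB⟩ : ∃ B : ℝ, B = 5 + Fm ^ 2 - 9 * F ^ 2 := ⟨_, rfl⟩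
  obtain ⟨D, hDdef⟩ : ∃ D : ℝ, D = Fm ^ 2 + 4 * c ^ 2 := ⟨_, rfl⟩
  rw [← hDdef] at hg₁
  have h9 : 9 * F ^ 2 = 5 + Fm ^ 2 - B := by rw [hB]; ring
  have hs2 : s ^ 2 = 1 - c ^ 2 := by linarith
  have hc2 : c ^ 2 ≤ 1 := by nlinarith [sq_nonneg s]
  have hD : (0:ℝ) ≤ D := by rw [hDdef]; positivity
  have hsD : Real.sqrt D ^ 2 = D := Real.sq_sqrt hD
  have hsDnn : 0 ≤ Real.sqrt D := Real.sqrt_nonneg D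
  have hA : (1:ℝ) - ξ = B / 2 - c ^ 2 := by rw [hξ, h9, hs2]; ring
  have hρval : ρ = Fm ^ 2 + 4 * c ^ 2 - B * c ^ 2 + c ^ 4 := by
    rw [hρ, h9, hs2]; ring
  have hexp : (B / 2 - c ^ 2) ^ 2 = B ^ 2 / 4 - B * c ^ 2 + c ^ 4 := by ring
  constructor
  · intro h
    have hsρ : 0 < Real.sqrt ρ := Real.sqrt_pos.mpr hρpos
    have h1 : Real.sqrt ρ < B / 2 - c ^ 2 := by linarith
    have hApos : 0 < B / 2 - c ^ 2 := lt_trans hsρ h1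
    have hρlt : ρ < (B / 2 - c ^ 2) ^ 2 := (Real.sqrt_lt' hApos).mp h1
    have hkey : 4 * D < B ^ 2 := by rw [hDdef]; linarith
    have hBpos : 0 < B := by nlinarith [sq_nonneg c]
    have hsqlt : Real.sqrt D < B / 2 := by
      rw [Real.sqrt_lt' (by linarith)]
      nlinarith
    rw [hg₁]
    linarith
  · intro h
    rw [hg₁] at h
    have hBlt : 2 * Real.sqrt D < B := by linarith
    have hBpos : 0 < B := by linarith
    have hkey : 4 * D < B ^ 2 := by nlinarith
    have hApos : 0 < B / 2 - c ^ 2 := by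
      have hc4 : 0 ≤ 4 * c ^ 2 * (4 - c ^ 2) :=
        mul_nonneg (by positivity) (by linarith)
      have h1 : (2 * c ^ 2) ^ 2 < B ^ 2 := by
        rw [hDdef] at hkey
        have : (2 * c ^ 2) ^ 2 = 4 * c ^ 4 := by ring
        rw [this]
        linarith [sq_nonneg Fm]
      have h2 : 2 * c ^ 2 < B := lt_of_pow_lt_pow_left₀ 2 (le_of_lt hBpos) h1
      linarith
    have hρlt : ρ < (B / 2 - c ^ 2) ^ 2 := by rw [hDdef] at hkey; linarith
    have h2 : Real.sqrt ρ < B / 2 - c ^ 2 := (Real.sqrt_lt' hApos).mpr hρlt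
    linarith
end

section
/- Let F, F₋, c, s be real numbers with c² + s² = 1, and define ξ = (9F² − F₋² − 1)/2 − s², ρ = (9F² − s²)c² + s²·F₋², g₂ = 5 + F₋² + 2√(F₋² + 4c²). Assume ρ > 0. Then ξ − √ρ < 1 if and only if 9F² < g₂. -/
set_option maxHeartbeats 2000000 in
/-- Lemma 3.1, case ν = 2 of relation (3.1): `F₂ = ξ − √ρ < 1` iff `9F² < g₂`. -/
theorem lyapunov_branch2_lt_one (F Fm c s ξ ρ g₂ : ℝ)
    (hcs : c ^ 2 + s ^ 2 = 1)
    (hξ : ξ = (9 * F ^ 2 - Fm ^ 2 - 1) / 2 - s ^ 2)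
    (hρ : ρ = (9 * F ^ 2 - s ^ 2) * c ^ 2 + s ^ 2 * Fm ^ 2)
    (hg₂ : g₂ = 5 + Fm ^ 2 + 2 * Real.sqrt (Fm ^ 2 + 4 * c ^ 2))
    (hρpos : 0 < ρ) :
    ξ - Real.sqrt ρ < 1 ↔ 9 * F ^ 2 < g₂ := by
  have hs2 : s ^ 2 = 1 - c ^ 2 := by linarith
  have hDnn : (0:ℝ) ≤ Fm ^ 2 + 4 * c ^ 2 := by positivity
  have hsD : Real.sqrt (Fm ^ 2 + 4 * c ^ 2) ^ 2 = Fm ^ 2 + 4 * c ^ 2 :=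
    Real.sq_sqrt hDnn
  have hsDnn : 0 ≤ Real.sqrt (Fm ^ 2 + 4 * c ^ 2) := Real.sqrt_nonneg _
  have hsρ : Real.sqrt ρ ^ 2 = ρ := Real.sq_sqrt hρpos.le
  have hsρpos : 0 < Real.sqrt ρ := Real.sqrt_pos.mpr hρpos
  have hc1 : c ^ 2 ≤ 1 := by nlinarith [sq_nonneg s]
  set sD := Real.sqrt (Fm ^ 2 + 4 * c ^ 2) with hsDdef
  set sρ := Real.sqrt ρ with hsρdef
  constructor
  · intro h
    rcases le_or_gt 0 (ξ - 1) with hA | hA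
    · have h2 : (ξ - 1) ^ 2 < ρ := by nlinarith
      have hu : (9 * F ^ 2 - Fm ^ 2 - 5) ^ 2 < 4 * (Fm ^ 2 + 4 * c ^ 2) := by
        nlinarith
      nlinarith [sq_nonneg (9 * F ^ 2 - Fm ^ 2 - 5 - 2 * sD),
        mul_nonneg hsDnn hsDnn]
    · have hc0 : 0 ≤ c ^ 2 := sq_nonneg c
      -- ξ - 1 < 0 gives u < -2c² ≤ 0 ≤ 2 sD
      nlinarith
  · intro h
    rcases lt_or_ge (ξ - 1) 0 with hA | hA
    · linarith
    rcases eq_or_lt_of_le hsDnn with hD0 | hDpos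
    · exfalso
      have hDz : Fm ^ 2 + 4 * c ^ 2 = 0 := by rw [← hsD, ← hD0]; ring
      have hc0 : c ^ 2 = 0 := by nlinarith [sq_nonneg Fm, sq_nonneg c]
      have hFm0 : Fm ^ 2 = 0 := by linarith [sq_nonneg c, sq_nonneg Fm]
      linarith
    · have hc4 : c ^ 2 * c ^ 2 < Fm ^ 2 + 4 * c ^ 2 := by
        nlinarith [sq_nonneg Fm, sq_nonneg c, mul_nonneg (sq_nonneg c) (sub_nonneg.mpr hc1)]
      have hcsD : c ^ 2 < sD := by
        nlinarith [sq_nonneg c]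
      have hu2 : (9 * F ^ 2 - Fm ^ 2 - 5) ^ 2 < 4 * (Fm ^ 2 + 4 * c ^ 2) := by
        nlinarith
      have hA2 : (ξ - 1) ^ 2 < ρ := by nlinarith
      nlinarith
end

section
/- Let F, F₋, c, s be real numbers with c² + s² = 1, and define ξ = (9F² − F₋² − 1)/2 − s², ρ = (9F² − s²)c² + s²·F₋², h₁ = (1 − |F₋|)². Assume ρ > 0. Then ξ + √ρ > −1 if and only if (9F² > h₁ or |F₋| < c²). -/
set_option maxHeartbeats 1600000 in
/-- Lemma 3.1, relation (3.2): `F₁ = ξ + √ρ > −1` iff `9F² > h₁` or `|F₋| < c²`. -/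
theorem lyapunov_branch1_gt_negone (F Fm c s ξ ρ h₁ : ℝ)
    (hcs : c ^ 2 + s ^ 2 = 1)
    (hξ : ξ = (9 * F ^ 2 - Fm ^ 2 - 1) / 2 - s ^ 2)
    (hρ : ρ = (9 * F ^ 2 - s ^ 2) * c ^ 2 + s ^ 2 * Fm ^ 2)
    (hh₁ : h₁ = (1 - |Fm|) ^ 2)
    (hρpos : 0 < ρ) :
    -1 < ξ + Real.sqrt ρ ↔ (h₁ < 9 * F ^ 2 ∨ |Fm| < c ^ 2) := by
  have hm2 : |Fm| ^ 2 = Fm ^ 2 := sq_abs Fm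
  set m := |Fm| with hm
  have hmnn : 0 ≤ m := abs_nonneg Fm
  have hs2 : s ^ 2 = 1 - c ^ 2 := by linarith
  have key : ρ - (-1 - ξ) ^ 2 = (9 * F ^ 2 - h₁) * ((m + 1) ^ 2 - 9 * F ^ 2) / 4 := by
    rw [hρ, hξ, hh₁, hs2, ← hm2]; ring
  have sqrt_pos : 0 < Real.sqrt ρ := Real.sqrt_pos.2 hρpos
  constructor
  · intro h
    by_contra hc
    push_neg at hc
    obtain ⟨h1, h2⟩ := hc
    -- h1 : 9F² ≤ h₁, h2 : c² ≤ m
    have hT : 0 ≤ -1 - ξ := by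
      rw [hξ, hs2]
      nlinarith [hh₁, hm2, hmnn, h1, h2]
    have hρT : ρ ≤ (-1 - ξ) ^ 2 := by
      nlinarith [key, h1, hmnn, hh₁]
    have : Real.sqrt ρ ≤ -1 - ξ := by
      calc Real.sqrt ρ ≤ Real.sqrt ((-1 - ξ) ^ 2) := Real.sqrt_le_sqrt hρT
        _ = -1 - ξ := by rw [Real.sqrt_sq hT]
    linarith
  · intro h
    rcases le_or_gt 0 (-1 - ξ) with hT | hT
    · -- from T ≥ 0 : 9F² ≤ m² + 1 - 2c²
      have hTa : 9 * F ^ 2 ≤ m ^ 2 + 1 - 2 * c ^ 2 := by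
        rw [hξ, hs2] at hT
        nlinarith [hT, hm2]
      rcases h with ha | hmu
      · -- a > h₁ : derive c² < m, hence ρ > T²
        have hcm : c ^ 2 < m := by
          rw [hh₁] at ha
          nlinarith [ha, hTa]
        have h2 : 0 < (m + 1) ^ 2 - 9 * F ^ 2 := by nlinarith [hTa, hcm, sq_nonneg c]
        have hprod : 0 < (9 * F ^ 2 - h₁) * ((m + 1) ^ 2 - 9 * F ^ 2) :=
          mul_pos (by linarith) h2
        have hρT : (-1 - ξ) ^ 2 < ρ := by linarith [key, hprod]
        have := (Real.lt_sqrt hT).2 hρT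
        linarith
      · -- m < c² contradicts ρ > 0 when T ≥ 0
        exfalso
        have hfac : 0 ≤ c ^ 2 * (m ^ 2 + 1 - 2 * c ^ 2 - 9 * F ^ 2) :=
          mul_nonneg (sq_nonneg c) (by linarith)
        have hle : ρ ≤ m ^ 2 - (c ^ 2) ^ 2 := by
          rw [hρ, hs2, ← hm2]
          nlinarith [hfac]
        have : m ^ 2 < (c ^ 2) ^ 2 := by nlinarith [hmu, hmnn]
        linarith
    · linarith [sqrt_pos]
end

section
/- Let F, F₋, c, s be real numbers with c² + s² = 1, and define ξ = (9F² − F₋² − 1)/2 − s², ρ = (9F² − s²)c² + s²·F₋², h₁ = (1 − |F₋|)², h₂ = (1 + |F₋|)². Assume ρ > 0. Then ξ − √ρ > −1 if and only if (9F² > h₂, or both 9F² < h₁ and |F₋| < c²). -/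
set_option maxHeartbeats 1600000 in
/-- Lemma 3.1, relation (3.3): `F₂ = ξ − √ρ > −1` iff `9F² > h₂`, or both
`9F² < h₁` and `|F₋| < c²`. -/
theorem lyapunov_branch2_gt_negone (F Fm c s ξ ρ h₁ h₂ : ℝ)
    (hcs : c ^ 2 + s ^ 2 = 1)
    (hξ : ξ = (9 * F ^ 2 - Fm ^ 2 - 1) / 2 - s ^ 2)
    (hρ : ρ = (9 * F ^ 2 - s ^ 2) * c ^ 2 + s ^ 2 * Fm ^ 2)
    (hh₁ : h₁ = (1 - |Fm|) ^ 2)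
    (hh₂ : h₂ = (1 + |Fm|) ^ 2)
    (hρpos : 0 < ρ) :
    -1 < ξ - Real.sqrt ρ ↔
      (h₂ < 9 * F ^ 2 ∨ (9 * F ^ 2 < h₁ ∧ |Fm| < c ^ 2)) := by
  have hm : 0 ≤ |Fm| := abs_nonneg _
  have hm2 : |Fm| ^ 2 = Fm ^ 2 := sq_abs _
  have hs2 : s ^ 2 = 1 - c ^ 2 := by linarith
  have hc2 : 0 ≤ c ^ 2 := sq_nonneg _
  have hsρ : Real.sqrt ρ ^ 2 = ρ := Real.sq_sqrt hρpos.le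
  have hs0 : 0 < Real.sqrt ρ := Real.sqrt_pos.mpr hρpos
  have key : (ξ + 1) ^ 2 - ρ = ((9 * F ^ 2 - h₂) * (9 * F ^ 2 - h₁)) / 4 := by
    rw [hξ, hρ, hs2, hh₁, hh₂, ← sq_abs Fm]; ring
  have hh12 : h₁ ≤ h₂ := by rw [hh₁, hh₂]; nlinarith [hm]
  constructor
  · intro h
    have hξ1 : 0 < ξ + 1 := by linarith
    have hρlt : ρ < (ξ + 1) ^ 2 := by
      nlinarith [hsρ, hs0, mul_pos (show (0:ℝ) < ξ + 1 - Real.sqrt ρ by linarith)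
        (show (0:ℝ) < ξ + 1 + Real.sqrt ρ by linarith)]
    have hprod : 0 < (9 * F ^ 2 - h₂) * (9 * F ^ 2 - h₁) := by linarith
    by_cases hcase : h₂ < 9 * F ^ 2
    · exact Or.inl hcase
    · push_neg at hcase
      have hlt1 : 9 * F ^ 2 < h₁ := by
        by_contra hcon
        push_neg at hcon
        nlinarith [mul_nonneg (sub_nonneg.mpr hcon) (sub_nonneg.mpr hcase)]
      refine Or.inr ⟨hlt1, ?_⟩
      have h1' : 9 * F ^ 2 < 1 - 2 * |Fm| + |Fm| ^ 2 := by
        rw [hh₁] at hlt1; nlinarith [hlt1]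
      have h2' : 0 < (9 * F ^ 2 - Fm ^ 2 - 1) / 2 - s ^ 2 + 1 := by rw [hξ] at hξ1; linarith
      linarith [h1', h2', hm2, hs2]
  · rintro (h | ⟨h1, h2⟩)
    · -- case 9F² > h₂
      have hξ1 : 0 < ξ + 1 := by
        have h' : 1 + 2 * |Fm| + |Fm| ^ 2 < 9 * F ^ 2 := by
          rw [hh₂] at h; nlinarith [h]
        rw [hξ, hs2]
        linarith [hm, hc2, hm2, h']
      have hρlt : ρ < (ξ + 1) ^ 2 := by
        have : 0 < (9 * F ^ 2 - h₂) * (9 * F ^ 2 - h₁) :=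
          mul_pos (by linarith) (by linarith)
        linarith
      have := (Real.sqrt_lt' hξ1).mpr hρlt
      linarith
    · -- case 9F² < h₁ and |Fm| < c²
      have hcpos : 0 < c ^ 2 := lt_of_le_of_lt hm h2
      have htm : |Fm| ^ 2 < (c ^ 2) ^ 2 := by nlinarith [hm, h2]
      have hξ1 : 0 < ξ + 1 := by
        rw [hξ, hs2]
        rw [hρ, hs2] at hρpos
        nlinarith [hρpos, hcpos, htm, hm2]
      have hρlt : ρ < (ξ + 1) ^ 2 := by
        have hlt2 : 9 * F ^ 2 < h₂ := by linarith
        have : 0 < (9 * F ^ 2 - h₂) * (9 * F ^ 2 - h₁) :=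
          mul_pos_of_neg_of_neg (by linarith) (by linarith)
        linarith
      have := (Real.sqrt_lt' hξ1).mpr hρlt
      linarith
end
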